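/- Let G(y) := −1/(4π|y|) for y ∈ ℝ³ \ {0}, let e₁ = (1,0,0), and let α ∈ ℝ with e^{iα} ≠ 1. Then for every compact set K ⊆ ℝ³ \ ℤe₁, the symmetric partial sums ∑_{|m| ≤ M} G(x − m e₁) e^{iαm} converge uniformly for x ∈ K as M → ∞. -/

import Mathlib

open scoped Real
open Filter Topology

lemma aux_est (p R δ r s : ℝ) (hp : 0 < p) (hR1 : 1 ≤ R) (hδ0 : 0 < δ)
    (hr : δ ≤ r) (hs0 : 0 ≤ s) (hs01 : s = 0 ∨ 1 ≤ s)
    (hrs : s - R ≤ r) (hrabs : |r - s| ≤ R) :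
    |(-1) / (4 * p * r) - (-1) / (4 * p * s)| ≤
      (max ((1 / (4 * p * δ) + 1 / (4 * p)) * (2 * R + 1) ^ 2) (2 * R / p)) / (s + 1) ^ 2 := by
  set C₀ : ℝ := 1 / (4 * p * δ) + 1 / (4 * p) with hC₀def
  set C : ℝ := max (C₀ * (2 * R + 1) ^ 2) (2 * R / p) with hCdef
  have hrpos : 0 < r := lt_of_lt_of_le hδ0 hr
  have hC₀0 : 0 < C₀ := by positivity
  have hC1 : C₀ * (2 * R + 1) ^ 2 ≤ C := le_max_left _ _
  have hC2 : 2 * R / p ≤ C := le_max_right _ _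
  by_cases hs : s ≤ 2 * R
  · have hb1 : |(-1 : ℝ) / (4 * p * r)| ≤ 1 / (4 * p * δ) := by
      rw [abs_div, abs_neg, abs_one, abs_of_pos (by positivity)]
      apply div_le_div_of_nonneg_left one_pos.le (by positivity)
      gcongr
    have hb2 : |(-1 : ℝ) / (4 * p * s)| ≤ 1 / (4 * p) := by
      rcases hs01 with rfl | hs1
      · simp
        positivity
      · rw [abs_div, abs_neg, abs_one, abs_of_pos (by positivity)]
        rw [div_le_div_iff₀ (by positivity) (by positivity)]
        nlinarith
    have hb : |(-1) / (4 * p * r) - (-1) / (4 * p * s)| ≤ C₀ := by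
      calc |(-1) / (4 * p * r) - (-1) / (4 * p * s)|
          ≤ |(-1 : ℝ) / (4 * p * r)| + |(-1 : ℝ) / (4 * p * s)| := abs_sub _ _
        _ ≤ 1 / (4 * p * δ) + 1 / (4 * p) := add_le_add hb1 hb2
        _ = C₀ := rfl
    refine hb.trans ?_
    rw [le_div_iff₀ (by positivity)]
    have h1 : (s + 1) ^ 2 ≤ (2 * R + 1) ^ 2 := by nlinarith
    nlinarith [mul_le_mul_of_nonneg_left h1 hC₀0.le]
  · push_neg at hs
    have hs1 : (1 : ℝ) ≤ s := by nlinarith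
    have hr2 : s / 2 ≤ r := by linarith
    have hspos : 0 < s := by linarith
    have hdiff : (-1) / (4 * p * r) - (-1) / (4 * p * s) = (r - s) / (4 * p * r * s) := by
      field_simp
      ring
    rw [hdiff, abs_div, abs_of_pos (show (0:ℝ) < 4 * p * r * s by positivity)]
    rw [div_le_div_iff₀ (by positivity) (by positivity)]
    have hCp : 2 * R ≤ C * p := by
      rw [div_le_iff₀ hp] at hC2
      linarith
    -- |r-s| * (s+1)^2 ≤ C * (4*p*r*s)
    have h1 : |r - s| * (s + 1) ^ 2 ≤ R * (4 * s ^ 2) := by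
      have h2 : (s + 1) ^ 2 ≤ 4 * s ^ 2 := by nlinarith
      have h3 : (0:ℝ) ≤ |r - s| := abs_nonneg _
      nlinarith
    have h4 : R * (4 * s ^ 2) ≤ C * (4 * p * r * s) := by
      have h5 : C * (4 * p * (s/2) * s) ≤ C * (4 * p * r * s) := by
        have hC0 : 0 ≤ C := le_trans (by positivity) hC2
        have := mul_le_mul_of_nonneg_right hr2 (mul_nonneg (mul_nonneg (by linarith : (0:ℝ) ≤ 4*p) hC0) hspos.le)
        nlinarith
      nlinarith [hCp, hspos, sq_nonneg s]
    linarith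


/-- Convergence of `∑ z^(i+1)/(i+1)` for `‖z‖ = 1`, `z ≠ 1`, via telescoping. -/
lemma aux_t (z : ℂ) (hz : ‖z‖ = 1) (hz1 : z ≠ 1) :
    ∃ L, Tendsto (fun M : ℕ => ∑ i ∈ Finset.range M, z ^ (i + 1) / ((i : ℂ) + 1))
      atTop (𝓝 L) := by
  classical
  set q : ℕ → ℂ := fun i => if i = 0 then 0 else z ^ (i + 1) / ((i : ℂ) * ((i : ℂ) + 1)) with hqdef
  have hzne : (1 : ℂ) - z ≠ 0 := sub_ne_zero.mpr (Ne.symm hz1)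
  have hznorm : ∀ n : ℕ, ‖z ^ n‖ = 1 := fun n => by rw [norm_pow, hz, one_pow]
  have hqs : Summable q := by
    apply Summable.of_norm_bounded (g := fun i : ℕ => 1 / (i : ℝ) ^ 2)
      (Real.summable_one_div_nat_pow.mpr one_lt_two)
    intro i
    rcases Nat.eq_zero_or_pos i with h0 | h1
    · simp [hqdef, h0]
    · have hi : (0 : ℝ) < i := by exact_mod_cast h1
      have hne : i ≠ 0 := by omega
      rw [hqdef]
      simp only [if_neg hne, norm_div, hznorm]
      have h2 : ‖(i : ℂ) * ((i : ℂ) + 1)‖ = (i : ℝ) * ((i : ℝ) + 1) := by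
        rw [norm_mul]
        have : ((i : ℂ) + 1) = ((i + 1 : ℕ) : ℂ) := by push_cast; ring
        rw [this, Complex.norm_natCast, Complex.norm_natCast]
        push_cast; ring
      rw [h2, one_div, one_div]
      rw [inv_le_inv₀ (by positivity) (by positivity)]
      nlinarith
  have key : ∀ M, 1 ≤ M → (1 - z) * (∑ i ∈ Finset.range M, z ^ (i + 1) / ((i : ℂ) + 1))
      = z - (∑ i ∈ Finset.range M, q i) - z ^ (M + 1) / (M : ℂ) := by
    intro M hM
    induction M, hM using Nat.le_induction with
    | base => simp [hqdef]; ring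
    | succ M hM ih =>
        rw [Finset.sum_range_succ, Finset.sum_range_succ (f := q), mul_add, ih]
        have hM0 : (M : ℂ) ≠ 0 := Nat.cast_ne_zero.mpr (by omega)
        have hM1 : (M : ℂ) + 1 ≠ 0 := by
          have : ((M : ℂ) + 1) = ((M + 1 : ℕ) : ℂ) := by push_cast; ring
          rw [this]; exact Nat.cast_ne_zero.mpr (by omega)
        rw [hqdef]
        simp only [if_neg (show M ≠ 0 by omega)]
        push_cast
        field_simp
        ring
  have hE : Tendsto (fun M : ℕ => z ^ (M + 1) / (M : ℂ)) atTop (𝓝 0) := by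
    apply squeeze_zero_norm (a := fun M : ℕ => 1 / (M : ℝ))
    · intro M
      rw [norm_div, hznorm, Complex.norm_natCast]
    · exact tendsto_one_div_atTop_nhds_zero_nat
  have hQ : Tendsto (fun M => ∑ i ∈ Finset.range M, q i) atTop (𝓝 (∑' i, q i)) :=
    hqs.hasSum.tendsto_sum_nat
  have h2 : Tendsto (fun M : ℕ => (1 - z) * ∑ i ∈ Finset.range M, z ^ (i + 1) / ((i : ℂ) + 1))
      atTop (𝓝 (z - (∑' i, q i) - 0)) := by
    apply Tendsto.congr' _ ((tendsto_const_nhds.sub hQ).sub hE)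
    filter_upwards [eventually_ge_atTop 1] with M hM
    exact (key M hM).symm
  refine ⟨(1 - z)⁻¹ * (z - (∑' i, q i) - 0), ?_⟩
  have h3 := h2.const_mul (1 - z)⁻¹
  apply h3.congr
  intro M
  rw [← mul_assoc, inv_mul_cancel₀ hzne, one_mul]

/-- Convergence of the symmetric partial sums of the comparison series. -/
lemma aux_B (α : ℝ) (hα : Complex.exp (Complex.I * (α : ℂ)) ≠ 1) :
    ∃ B, Tendsto (fun M : ℕ => ∑ m ∈ Finset.Icc (-(M : ℤ)) (M : ℤ),
      ((-1 / (4 * π * |(m : ℝ)|) : ℝ) : ℂ) * Complex.exp (Complex.I * (α : ℂ) * (m : ℂ)))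
      atTop (𝓝 B) := by
  classical
  set f : ℤ → ℂ := fun m =>
    ((-1 / (4 * π * |(m : ℝ)|) : ℝ) : ℂ) * Complex.exp (Complex.I * (α : ℂ) * (m : ℂ)) with hf
  set w : ℂ := Complex.exp (Complex.I * (α : ℂ)) with hw
  set v : ℂ := Complex.exp (-(Complex.I * (α : ℂ))) with hv
  have hwnorm : ‖w‖ = 1 := by
    rw [hw, show Complex.I * (α : ℂ) = (α : ℂ) * Complex.I by ring,
      Complex.norm_exp_ofReal_mul_I]
  have hvnorm : ‖v‖ = 1 := by
    rw [hv, show -(Complex.I * (α : ℂ)) = ((-α : ℝ) : ℂ) * Complex.I by push_cast; ring,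
      Complex.norm_exp_ofReal_mul_I]
  have hwv : w * v = 1 := by
    rw [hw, hv, ← Complex.exp_add]; simp
  have hv1 : v ≠ 1 := by
    intro h
    apply hα
    have := hwv
    rw [h, mul_one] at this
    exact this
  obtain ⟨Lw, hLw⟩ := aux_t w hwnorm hα
  obtain ⟨Lv, hLv⟩ := aux_t v hvnorm hv1
  have step1 : ∀ M : ℕ, ∑ m ∈ Finset.Icc (-(M : ℤ)) (M : ℤ), f m
      = ∑ i ∈ Finset.range M, (f ((i : ℤ) + 1) + f (-((i : ℤ) + 1))) := by
    intro M
    induction M with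
    | zero =>
        simp [hf]
    | succ M ih =>
        have hset : Finset.Icc (-((M + 1 : ℕ) : ℤ)) ((M + 1 : ℕ) : ℤ)
            = insert (-((M : ℤ) + 1)) (insert ((M : ℤ) + 1) (Finset.Icc (-(M : ℤ)) (M : ℤ))) := by
          ext x
          simp only [Finset.mem_Icc, Finset.mem_insert]
          push_cast
          omega
        rw [hset, Finset.sum_insert (by simp only [Finset.mem_insert, Finset.mem_Icc]; omega),
          Finset.sum_insert (by simp only [Finset.mem_Icc]; omega), ih, Finset.sum_range_succ]
        ring
  have step2 : ∀ i : ℕ, f ((i : ℤ) + 1) + f (-((i : ℤ) + 1))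
      = ((-1 / (4 * π) : ℝ) : ℂ) *
        (w ^ (i + 1) / ((i : ℂ) + 1) + v ^ (i + 1) / ((i : ℂ) + 1)) := by
    intro i
    have e1 : Complex.exp (Complex.I * (α : ℂ) * (((i : ℤ) + 1 : ℤ) : ℂ)) = w ^ (i + 1) := by
      rw [show Complex.I * (α : ℂ) * (((i : ℤ) + 1 : ℤ) : ℂ)
          = ((i + 1 : ℕ) : ℂ) * (Complex.I * (α : ℂ)) by push_cast; ring,
        Complex.exp_nat_mul]
    have e2 : Complex.exp (Complex.I * (α : ℂ) * ((-((i : ℤ) + 1) : ℤ) : ℂ)) = v ^ (i + 1) := by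
      rw [show Complex.I * (α : ℂ) * ((-((i : ℤ) + 1) : ℤ) : ℂ)
          = ((i + 1 : ℕ) : ℂ) * (-(Complex.I * (α : ℂ))) by push_cast; ring,
        Complex.exp_nat_mul]
    rw [hf]
    simp only [e1, e2]
    have habs1 : |((((i : ℤ) + 1 : ℤ)) : ℝ)| = (i : ℝ) + 1 := by
      push_cast; rw [abs_of_nonneg (by positivity)]
    have habs2 : |(((-((i : ℤ) + 1) : ℤ)) : ℝ)| = (i : ℝ) + 1 := by
      push_cast; rw [abs_neg, abs_of_nonneg (by positivity)]
    rw [habs1, habs2]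
    have hi : ((i : ℂ) + 1) ≠ 0 := by
      have : ((i : ℂ) + 1) = ((i + 1 : ℕ) : ℂ) := by push_cast; ring
      rw [this]; exact Nat.cast_ne_zero.mpr (by omega)
    have hπ : (π : ℝ) ≠ 0 := Real.pi_ne_zero
    push_cast
    field_simp
    ring
  refine ⟨((-1 / (4 * π) : ℝ) : ℂ) * (Lw + Lv), ?_⟩
  have h3 : Tendsto (fun M : ℕ => ((-1 / (4 * π) : ℝ) : ℂ) *
      ((∑ i ∈ Finset.range M, w ^ (i + 1) / ((i : ℂ) + 1))
        + (∑ i ∈ Finset.range M, v ^ (i + 1) / ((i : ℂ) + 1))))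
      atTop (𝓝 (((-1 / (4 * π) : ℝ) : ℂ) * (Lw + Lv))) :=
    (hLw.add hLv).const_mul _
  apply h3.congr
  intro M
  rw [show (Finset.Icc (-(M:ℤ)) (M:ℤ)).sum f = ∑ m ∈ Finset.Icc (-(M:ℤ)) (M:ℤ), f m from rfl,
    step1, Finset.sum_congr rfl (fun i _ => step2 i), ← Finset.mul_sum, Finset.sum_add_distrib]

/-- well-definedness of the quasiperiodic Green's function for the
one-dimensional lattice ℤe₁ in three dimensions: if e^{iα} ≠ 1, the symmetric partial
sums ∑_{|m|≤M} G(x − m e₁) e^{iαm} with G(y) = −1/(4π|y|) converge uniformly on every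
compact set avoiding the lattice points. -/
theorem stmt_12
    (G : EuclideanSpace ℝ (Fin 3) → ℝ)
    (hG : ∀ y : EuclideanSpace ℝ (Fin 3), G y = -1 / (4 * π * ‖y‖))
    (e₁ : EuclideanSpace ℝ (Fin 3))
    (he₁ : e₁ = EuclideanSpace.single 0 1)
    (α : ℝ) (hα : Complex.exp (Complex.I * (α : ℂ)) ≠ 1)
    (K : Set (EuclideanSpace ℝ (Fin 3)))
    (hK_cpt : IsCompact K)
    (hK : K ⊆ {x : EuclideanSpace ℝ (Fin 3) | ∀ m : ℤ, x ≠ (m : ℝ) • e₁}) :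
    ∃ g : EuclideanSpace ℝ (Fin 3) → ℂ,
      TendstoUniformlyOn
        (fun (M : ℕ) (x : EuclideanSpace ℝ (Fin 3)) =>
          ∑ m ∈ Finset.Icc (-(M : ℤ)) (M : ℤ),
            ((G (x - (m : ℝ) • e₁) : ℂ)) * Complex.exp (Complex.I * (α : ℂ) * (m : ℂ)))
        g atTop K := by
  classical
  rcases K.eq_empty_or_nonempty with rfl | hne
  · exact ⟨0, fun u hu => by filter_upwards with n x hx; exact absurd hx (by simp)⟩
  -- bound on K
  obtain ⟨R₀, hR₀⟩ := hK_cpt.isBounded.exists_norm_le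
  set R : ℝ := max R₀ 1 with hRdef
  have hR1 : (1 : ℝ) ≤ R := le_max_right _ _
  have hRx : ∀ x ∈ K, ‖x‖ ≤ R := fun x hx => (hR₀ x hx).trans (le_max_left _ _)
  have he₁norm : ‖e₁‖ = 1 := by rw [he₁, EuclideanSpace.norm_single]; norm_num
  have hme : ∀ m : ℤ, ‖((m : ℝ)) • e₁‖ = |(m : ℝ)| := by
    intro m; rw [norm_smul, he₁norm, mul_one, Real.norm_eq_abs]
  -- uniform lower bound on distances to lattice points
  have hδm : ∀ m : ℤ, ∃ d, 0 < d ∧ ∀ x ∈ K, d ≤ ‖x - (m : ℝ) • e₁‖ := by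
    intro m
    obtain ⟨x₀, hx₀K, hx₀⟩ := hK_cpt.exists_isMinOn hne
      (((continuous_id.sub continuous_const).norm).continuousOn
        (f := fun x => ‖x - (m : ℝ) • e₁‖))
    refine ⟨‖x₀ - (m : ℝ) • e₁‖, ?_, fun x hx => hx₀ hx⟩
    rw [norm_pos_iff]
    exact sub_ne_zero.mpr (hK hx₀K m)
  choose d hd0 hdK using hδm
  set N : ℕ := ⌈R⌉₊ + 1 with hNdef
  have hTne : (Finset.Icc (-(N : ℤ)) (N : ℤ)).Nonempty := ⟨0, by simp⟩
  set δ : ℝ := min 1 ((Finset.Icc (-(N : ℤ)) (N : ℤ)).inf' hTne d) with hδdef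
  have hδ0 : 0 < δ := lt_min one_pos (by rw [Finset.lt_inf'_iff]; exact fun m _ => hd0 m)
  have hδ1 : δ ≤ 1 := min_le_left _ _
  have hδ : ∀ x ∈ K, ∀ m : ℤ, δ ≤ ‖x - (m : ℝ) • e₁‖ := by
    intro x hx m
    by_cases hm : m ∈ Finset.Icc (-(N : ℤ)) (N : ℤ)
    · exact le_trans (le_trans (min_le_right _ _) (Finset.inf'_le d hm)) (hdK m x hx)
    · have h2' : (N : ℤ) < m ∨ m < -(N : ℤ) := by
        simp only [Finset.mem_Icc, not_and_or, not_le] at hm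
        omega
      have hN0 : (0 : ℝ) ≤ ((N : ℕ) : ℝ) := Nat.cast_nonneg N
      have h1 : (N : ℝ) < |(m : ℝ)| := by
        rcases h2' with h | h
        · have hm' : ((N : ℕ) : ℝ) < (m : ℝ) := by exact_mod_cast h
          rw [abs_of_pos (lt_of_le_of_lt hN0 hm')]; exact hm'
        · have hm' : (m : ℝ) < -((N : ℕ) : ℝ) := by exact_mod_cast h
          rw [abs_of_neg (by linarith)]; linarith
      have h2 : R + 1 ≤ (N : ℝ) := by
        have := Nat.le_ceil R
        rw [hNdef]; push_cast; linarith
      have h3 : ‖(m : ℝ) • e₁‖ - ‖x‖ ≤ ‖x - (m : ℝ) • e₁‖ := by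
        rw [norm_sub_rev]
        exact norm_sub_norm_le _ _
      rw [hme] at h3
      have := hRx x hx
      linarith
  -- decomposition
  set c : ℤ → ℝ := fun m => -1 / (4 * π * |(m : ℝ)|) with hcdef
  set fc : ℤ → EuclideanSpace ℝ (Fin 3) → ℂ := fun m x =>
    ((G (x - (m : ℝ) • e₁) - c m : ℝ) : ℂ) * Complex.exp (Complex.I * (α : ℂ) * (m : ℂ))
    with hfcdef
  have hπ : (0 : ℝ) < π := Real.pi_pos
  set C : ℝ := max ((1 / (4 * π * δ) + 1 / (4 * π)) * (2 * R + 1) ^ 2) (2 * R / π) with hCdef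
  set u : ℤ → ℝ := fun m => C / (|(m : ℝ)| + 1) ^ 2 with hudef
  have hexp : ∀ m : ℤ, ‖Complex.exp (Complex.I * (α : ℂ) * (m : ℂ))‖ = 1 := by
    intro m
    rw [show Complex.I * (α : ℂ) * (m : ℂ) = ((α * m : ℝ) : ℂ) * Complex.I by push_cast; ring,
      Complex.norm_exp_ofReal_mul_I]
  -- the key estimate
  have hfu : ∀ (m : ℤ), ∀ x ∈ K, ‖fc m x‖ ≤ u m := by
    intro m x hx
    have hr : δ ≤ ‖x - (m : ℝ) • e₁‖ := hδ x hx m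
    have hnorm : ‖fc m x‖ = |G (x - (m : ℝ) • e₁) - c m| := by
      rw [hfcdef]
      rw [norm_mul, hexp, mul_one, Complex.norm_real, Real.norm_eq_abs]
    rw [hnorm, hG]
    show |(-1) / (4 * π * ‖x - (m : ℝ) • e₁‖) - (-1) / (4 * π * |(m : ℝ)|)|
      ≤ C / (|(m : ℝ)| + 1) ^ 2
    have hs01 : |(m : ℝ)| = 0 ∨ 1 ≤ |(m : ℝ)| := by
      rcases eq_or_ne m 0 with rfl | hm0
      · left; simp
      · right
        have h1 : (1 : ℤ) ≤ |m| := Int.one_le_abs hm0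
        calc (1 : ℝ) ≤ ((|m| : ℤ) : ℝ) := by exact_mod_cast h1
          _ = |(m : ℝ)| := by push_cast; ring
    have hrs : |(m : ℝ)| - R ≤ ‖x - (m : ℝ) • e₁‖ := by
      have h3 : ‖(m : ℝ) • e₁‖ - ‖x‖ ≤ ‖x - (m : ℝ) • e₁‖ := by
        rw [norm_sub_rev]; exact norm_sub_norm_le _ _
      rw [hme] at h3
      have := hRx x hx
      linarith
    have hrabs : abs (‖x - (m : ℝ) • e₁‖ - |(m : ℝ)|) ≤ R := by
      have h4 := abs_norm_sub_norm_le (x - (m : ℝ) • e₁) (-((m : ℝ) • e₁))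
      rw [norm_neg, hme, sub_neg_eq_add, sub_add_cancel] at h4
      exact h4.trans (hRx x hx)
    exact aux_est π R δ _ _ hπ hR1 hδ0 hr (abs_nonneg _) hs01 hrs hrabs
  -- summability of the majorant
  have hsum1 : Summable (fun n : ℕ => C / ((n : ℝ) + 1) ^ 2) := by
    have h0 : Summable (fun n : ℕ => 1 / ((n : ℝ) + 1) ^ 2) := by
      have h1 := (summable_nat_add_iff (f := fun n : ℕ => 1 / (n : ℝ) ^ 2) 1).mpr
        (Real.summable_one_div_nat_pow.mpr one_lt_two)
      apply h1.congr
      intro n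
      push_cast
      ring
    have h2 := h0.mul_left C
    apply h2.congr
    intro n
    rw [mul_one_div]
  have hu : Summable u := by
    apply Summable.of_nat_of_neg
    · apply hsum1.congr
      intro n
      simp only [hudef]
      push_cast [Nat.abs_cast]
      rfl
    · apply hsum1.congr
      intro n
      simp only [hudef]
      push_cast [abs_neg, Nat.abs_cast]
      rfl
  -- uniform convergence of the regular part
  have hA := tendstoUniformlyOn_tsum hu hfu (s := K)
  have hIcc : Tendsto (fun M : ℕ => Finset.Icc (-(M : ℤ)) (M : ℤ)) atTop atTop := by
    apply tendsto_atTop_finset_of_monotone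
    · intro a b hab
      apply Finset.Icc_subset_Icc <;> omega
    · intro m
      exact ⟨m.natAbs, by simp only [Finset.mem_Icc]; omega⟩
  have hA' : TendstoUniformlyOn (fun (M : ℕ) x => ∑ m ∈ Finset.Icc (-(M : ℤ)) (M : ℤ), fc m x)
      (fun x => ∑' m, fc m x) atTop K := fun v hv => hIcc.eventually (hA v hv)
  obtain ⟨B, hB⟩ := aux_B α hα
  have hB' : TendstoUniformlyOn
      (fun (M : ℕ) (_ : EuclideanSpace ℝ (Fin 3)) => ∑ m ∈ Finset.Icc (-(M : ℤ)) (M : ℤ),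
        ((c m : ℝ) : ℂ) * Complex.exp (Complex.I * (α : ℂ) * (m : ℂ)))
      (fun _ => B) atTop K := hB.tendstoUniformlyOn_const K
  refine ⟨(fun x => ∑' m, fc m x) + (fun _ => B), ?_⟩
  apply (hA'.add hB').congr
  filter_upwards with M x hx
  simp only [Pi.add_apply]
  rw [← Finset.sum_add_distrib]
  apply Finset.sum_congr rfl
  intro m _
  rw [hfcdef]
  push_cast
  ring
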